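/- Suppose the m agents hold calibration scores of sizes n₁,…,n_m, with all scores and the test score i.i.d. with cdf F_S. For ℓ_j ∈ {1,…,n_j} and k ∈ {1,…,m}, let S_(ℓ₁,…,ℓ_m,k) be the k-th smallest among the agents' local order statistics Q_(ℓ_j)(S_j), and Ĉ(x) := {y : s(x,y) ≤ S_(ℓ₁,…,ℓ_m,k)}. Then P(P(Y ∈ Ĉ(X) | D) ≥ 1−α) ≥ PB(k−1; (F_{U_(ℓ_j:n_j)}(1−α))_{j=1,…,m}), where PB(·; u) is the cdf of the Poisson-Binomial distribution with parameter vector u and F_{U_(ℓ_j:n_j)} is the cdf of the Beta(ℓ_j, n_j−ℓ_j+1) distribution; equality holds if the scores are almost surely distinct. -/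

import Mathlib

open MeasureTheory ProbabilityTheory Set
open scoped ENNReal

/-- The `r`-th smallest value (order statistic, 1-indexed, ties with multiplicity)
of a finite real vector. -/
noncomputable def orderStat {N : ℕ} (S : Fin N → ℝ) (r : ℕ) : ℝ :=
  ((Multiset.ofList (List.ofFn S)).sort (· ≤ ·)).getD (r - 1) 0

/-- Product of `N` i.i.d. uniform distributions on `[0,1]`. -/
noncomputable def unifPi (N : ℕ) : Measure (Fin N → ℝ) :=
  Measure.pi fun _ => volume.restrict (Icc (0:ℝ) 1)

/-- The Beta(r, N-r+1) distribution: the law of the `r`-th order statistic of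
`N` i.i.d. uniform random variables on `[0,1]`. -/
noncomputable def betaOS (N r : ℕ) : Measure ℝ :=
  Measure.map (fun u => orderStat u r) (unifPi N)

/-- The cdf of the Beta(r, N-r+1) distribution (cdf of `U_(r:N)`). -/
noncomputable def betaCDF (N r : ℕ) (t : ℝ) : ℝ := (betaOS N r (Iic t)).toReal

/-- Generalized inverse (quantile function) of a cdf. -/
noncomputable def genInv (F : ℝ → ℝ) (p : ℝ) : ℝ := sInf {x | p ≤ F x}

/-- Quantile function of the Beta(r, N-r+1) distribution. -/
noncomputable def betaQuantile (N r : ℕ) (p : ℝ) : ℝ := genInv (betaCDF N r) p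

/-- Quantile-of-quantiles: the `k`-th smallest of the `m` within-group `ℓ`-th
order statistics of an `n × m` array. -/
noncomputable def qqStat {n m : ℕ} (ℓ k : ℕ) (Z : Fin n → Fin m → ℝ) : ℝ :=
  orderStat (fun j => orderStat (fun i => Z i j) ℓ) k

/-- Product of `n × m` i.i.d. uniform distributions on `[0,1]`. -/
noncomputable def unifPi2 (n m : ℕ) : Measure (Fin n → Fin m → ℝ) :=
  Measure.pi fun _ => Measure.pi fun _ => volume.restrict (Icc (0:ℝ) 1)

/-- The law of `U_(ℓ:n, k:m)`, the `k`-th order statistic of the `m` within-group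
`ℓ`-th order statistics of an `n × m` array of i.i.d. uniform variables
(equivalently, of `m` i.i.d. Beta(ℓ, n-ℓ+1) variables). -/
noncomputable def betaBetaOS (n m ℓ k : ℕ) : Measure ℝ :=
  Measure.map (qqStat ℓ k) (unifPi2 n m)

/-- The auxiliary function `g(t) = sup_{δ ∈ (0, min{t,1-t})} (t-δ)/√(log(1/δ))`. -/
noncomputable def gFun (t : ℝ) : ℝ :=
  sSup ((fun δ => (t - δ) / Real.sqrt (Real.log (1/δ))) '' Ioo 0 (min t (1 - t)))

/-- The cdf of the Poisson-Binomial distribution with parameter vector `u`,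
evaluated at the integer `r`. -/
noncomputable def pbCDF {m : ℕ} (u : Fin m → ℝ) (r : ℕ) : ℝ :=
  ∑ A ∈ Finset.univ.powerset.filter (fun A : Finset (Fin m) => A.card ≤ r),
    (∏ j ∈ A, u j) * ∏ j ∈ Aᶜ, (1 - u j)

section CountLemmas

lemma sorted_getElem_mem_lowerSet {l : List ℝ} (hs : l.Pairwise (· ≤ ·))
    {L : Set ℝ} [DecidablePred (· ∈ L)] (hL : IsLowerSet L) {p : ℕ} (hp : p < l.length) :
    l[p] ∈ L ↔ p + 1 ≤ l.countP (fun x => decide (x ∈ L)) := by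
  constructor
  · intro h
    have hsplit : l.countP (fun x => decide (x ∈ L))
        = (l.take (p+1)).countP (fun x => decide (x ∈ L))
          + (l.drop (p+1)).countP (fun x => decide (x ∈ L)) := by
      conv_lhs => rw [← List.take_append_drop (p+1) l]
      rw [List.countP_append]
    have htake : (l.take (p+1)).countP (fun x => decide (x ∈ L)) = p + 1 := by
      have hall : ∀ a ∈ l.take (p+1), (fun x => decide (x ∈ L)) a = true := by
        intro a ha
        rw [List.mem_take_iff_getElem] at ha
        obtain ⟨i, hi, rfl⟩ := ha
        have hi' : i < l.length := lt_of_lt_of_le (lt_of_lt_of_le hi (min_le_right _ _)) le_rfl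
        have hile : i ≤ p := Nat.lt_succ_iff.mp (lt_of_lt_of_le hi (min_le_left _ _))
        have : l[i] ≤ l[p] := by
          rcases lt_or_eq_of_le hile with h' | h'
          · simpa using List.pairwise_iff_get.mp hs ⟨i, hi'⟩ ⟨p, hp⟩ h'
          · subst h'; exact le_rfl
        simpa using hL this h
      rw [List.countP_eq_length.mpr hall, List.length_take]
      exact min_eq_left (Nat.succ_le_of_lt hp)
    rw [hsplit, htake]
    exact Nat.le_add_right _ _
  · intro h
    by_contra hnot
    have hsplit : l.countP (fun x => decide (x ∈ L))
        = (l.take p).countP (fun x => decide (x ∈ L))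
          + (l.drop p).countP (fun x => decide (x ∈ L)) := by
      conv_lhs => rw [← List.take_append_drop p l]
      rw [List.countP_append]
    have hdrop : (l.drop p).countP (fun x => decide (x ∈ L)) = 0 := by
      rw [List.countP_eq_zero]
      intro a ha
      rw [List.mem_iff_getElem] at ha
      obtain ⟨i, hi, rfl⟩ := ha
      have hi2 : p + i < l.length := by
        rw [List.length_drop] at hi; omega
      rw [List.getElem_drop]
      simp only [decide_eq_true_eq]
      intro haL
      apply hnot
      have hle : l[p] ≤ l[p+i] := by
        rcases Nat.eq_or_lt_of_le (Nat.le_add_right p i) with h' | h'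
        · simp [← h']
        · simpa using List.pairwise_iff_get.mp hs ⟨p, hp⟩ ⟨p+i, hi2⟩ (by exact h')
      exact hL hle haL
    have htake : (l.take p).countP (fun x => decide (x ∈ L)) ≤ p := by
      calc (l.take p).countP _ ≤ (l.take p).length := List.countP_le_length
        _ ≤ p := by rw [List.length_take]; exact min_le_left _ _
    omega

lemma orderStat_mem_lowerSet {N : ℕ} (S : Fin N → ℝ) (r : ℕ) (h1 : 1 ≤ r) (h2 : r ≤ N)
    {L : Set ℝ} [DecidablePred (· ∈ L)] (hL : IsLowerSet L) :
    orderStat S r ∈ L ↔ r ≤ (Finset.univ.filter fun i => S i ∈ L).card := by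
  set l := ((Multiset.ofList (List.ofFn S)).sort (· ≤ ·)) with hldef
  have hlen : l.length = N := by
    simp [hldef]
  have hsorted : l.Pairwise (· ≤ ·) := Multiset.pairwise_sort _ _
  have hp : r - 1 < l.length := by omega
  have hgetD : orderStat S r = l[r-1] := by
    rw [orderStat, List.getD_eq_getElem l 0 hp]
  have hcount : l.countP (fun x => decide (x ∈ L))
      = (Finset.univ.filter fun i => S i ∈ L).card := by
    have h1' : (l : Multiset ℝ) = Multiset.ofList (List.ofFn S) := Multiset.sort_eq _ _
    have : l.countP (fun x => decide (x ∈ L)) = (List.ofFn S).countP (fun x => decide (x ∈ L)) := by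
      have := congrArg (Multiset.countP (fun x => decide (x ∈ L))) h1'
      simpa using this
    rw [this, List.ofFn_eq_map, List.countP_map]
    rw [Finset.card_filter]
    rw [Fin.univ_def]
    simp [Finset.sum, Multiset.countP_eq_card_filter, Multiset.card_map]
    generalize (List.finRange N) = t
    induction t with
    | nil => simp
    | cons a t ih =>
      rw [List.countP_cons, List.map_cons, List.sum_cons, ih]
      by_cases h : S a ∈ L <;> simp [h, Function.comp] <;> omega
  rw [hgetD, sorted_getElem_mem_lowerSet hsorted hL hp, hcount]
  omega


variable {ι : Type*} [Fintype ι] [DecidableEq ι] {X : ι → Type*} [∀ i, MeasurableSpace (X i)]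

lemma exact_eq_pi (A : ∀ i, Set (X i)) (B : Finset ι) :
    {v : ∀ i, X i | ∀ i, (v i ∈ A i ↔ i ∈ B)}
      = Set.pi Set.univ (fun i => if i ∈ B then A i else (A i)ᶜ) := by
  ext v
  simp only [mem_setOf_eq, Set.mem_pi, mem_univ, true_implies]
  constructor
  · intro h i
    by_cases hi : i ∈ B <;> simp [hi, h i]
  · intro h i
    have := h i
    by_cases hi : i ∈ B <;> simp [hi] at this <;> simp [hi, this]

lemma countset_eq_biUnion (A : ∀ i, Set (X i)) [∀ i, DecidablePred (· ∈ A i)]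
    (Q : Finset ι → Prop) [DecidablePred Q] :
    {v : ∀ i, X i | Q (Finset.univ.filter fun i => v i ∈ A i)}
      = ⋃ B ∈ (Finset.univ.powerset.filter Q), {v | ∀ i, (v i ∈ A i ↔ i ∈ B)} := by
  ext v
  simp only [mem_setOf_eq, mem_iUnion, Finset.mem_filter, Finset.mem_powerset, exists_prop]
  constructor
  · intro h
    exact ⟨Finset.univ.filter fun i => v i ∈ A i, ⟨Finset.filter_subset _ _, h⟩,
      fun i => by simp⟩
  · rintro ⟨B, ⟨-, hQ⟩, hB⟩
    have : (Finset.univ.filter fun i => v i ∈ A i) = B := by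
      ext i; simp [hB i]
    rwa [this]

lemma countset_measurable (A : ∀ i, Set (X i)) [∀ i, DecidablePred (· ∈ A i)]
    (hA : ∀ i, MeasurableSet (A i))
    (Q : Finset ι → Prop) [DecidablePred Q] :
    MeasurableSet {v : ∀ i, X i | Q (Finset.univ.filter fun i => v i ∈ A i)} := by
  rw [countset_eq_biUnion]
  refine MeasurableSet.biUnion (Finset.countable_toSet _) (fun B _ => ?_)
  rw [exact_eq_pi]
  exact MeasurableSet.pi (Set.countable_univ) (fun i _ => by
    by_cases hi : i ∈ B <;> simp [hi, hA i, (hA i).compl])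

/-- L2: probability of a count event under a product measure. -/
lemma pi_countset_eq (κ : ∀ i, Measure (X i)) [∀ i, IsProbabilityMeasure (κ i)]
    (A : ∀ i, Set (X i)) [∀ i, DecidablePred (· ∈ A i)]
    (hA : ∀ i, MeasurableSet (A i)) (Q : Finset ι → Prop) [DecidablePred Q] :
    Measure.pi κ {v | Q (Finset.univ.filter fun i => v i ∈ A i)}
      = ∑ B ∈ Finset.univ.powerset.filter Q,
          ∏ i, (if i ∈ B then κ i (A i) else κ i (A i)ᶜ) := by
  rw [countset_eq_biUnion]
  rw [measure_biUnion_finset ?hd ?hm]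
  case hd =>
    intro B hB B' hB' hne
    simp only [Function.onFun]
    rw [Set.disjoint_left]
    intro v hv hv'
    exact hne (by ext i; rw [← hv i, ← hv' i])
  case hm =>
    intro B _
    rw [exact_eq_pi]
    exact MeasurableSet.pi (Set.countable_univ) (fun i _ => by
      by_cases hi : i ∈ B <;> simp [hi, hA i, (hA i).compl])
  refine Finset.sum_congr rfl (fun B _ => ?_)
  rw [exact_eq_pi, Measure.pi_pi]
  exact Finset.prod_congr rfl (fun i _ => by by_cases hi : i ∈ B <;> simp [hi])

end CountLemmas

/-- L5: regrouping a sum over families of finsets. -/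
lemma regroup_sum {m : ℕ} {X : Fin m → Type*} [∀ j, Fintype (X j)] [∀ j, DecidableEq (X j)]
    (h : ∀ j, Finset (X j) → ℝ≥0∞) (P : ∀ j, Finset (X j) → Prop)
    [∀ j, DecidablePred (P j)] (Q : Finset (Fin m) → Prop) [DecidablePred Q] :
    ∑ c ∈ (Fintype.piFinset fun j => (Finset.univ : Finset (X j)).powerset).filter
        (fun c => Q (Finset.univ.filter fun j => P j (c j))),
      ∏ j, h j (c j)
    = ∑ A ∈ Finset.univ.powerset.filter Q,
        ∏ j, ∑ B ∈ Finset.univ.powerset.filter (fun B => P j B ↔ j ∈ A), h j B := by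
  have key := Finset.sum_fiberwise_eq_sum_filter
    (Fintype.piFinset fun j => (Finset.univ : Finset (X j)).powerset)
    (Finset.univ.powerset.filter Q)
    (fun c => Finset.univ.filter fun j => P j (c j))
    (fun c => ∏ j, h j (c j))
  have h1 : ∀ A : Finset (Fin m),
      (Fintype.piFinset fun j => (Finset.univ : Finset (X j)).powerset).filter
        (fun c => (Finset.univ.filter fun j => P j (c j)) = A)
      = Fintype.piFinset fun j =>
          (Finset.univ : Finset (X j)).powerset.filter (fun B => P j B ↔ j ∈ A) := by
    intro A
    ext c
    simp only [Finset.mem_filter, Fintype.mem_piFinset, Finset.mem_powerset,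
      Finset.subset_univ, true_and, Finset.ext_iff, Finset.mem_univ]
    exact ⟨fun hc => hc.2, fun hc => ⟨fun _ => trivial, hc⟩⟩
  have h2 : (Fintype.piFinset fun j => (Finset.univ : Finset (X j)).powerset).filter
      (fun c => (Finset.univ.filter fun j => P j (c j)) ∈ Finset.univ.powerset.filter Q)
      = (Fintype.piFinset fun j => (Finset.univ : Finset (X j)).powerset).filter
        (fun c => Q (Finset.univ.filter fun j => P j (c j))) := by
    apply Finset.filter_congr
    intro c _
    simp
  rw [h2] at key
  rw [← key]
  refine Finset.sum_congr rfl (fun A _ => ?_)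
  rw [h1 A, ← Finset.prod_univ_sum]

lemma measurable_orderStat {N r : ℕ} (h1 : 1 ≤ r) (h2 : r ≤ N) :
    Measurable fun u : Fin N → ℝ => orderStat u r := by
  apply measurable_of_Iic
  intro t
  have heq : (fun u : Fin N → ℝ => orderStat u r) ⁻¹' Iic t
      = {v : Fin N → ℝ | (fun s : Finset (Fin N) => r ≤ s.card)
          (Finset.univ.filter fun i => v i ∈ Iic t)} := by
    ext v
    simp only [mem_preimage, mem_Iic, mem_setOf_eq]
    exact (orderStat_mem_lowerSet v r h1 h2 (isLowerSet_Iic t))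
  rw [heq]
  exact countset_measurable (X := fun _ : Fin N => ℝ) (fun _ => Iic t) (fun _ => measurableSet_Iic) (fun s => r ≤ s.card)

instance : IsProbabilityMeasure (volume.restrict (Icc (0:ℝ) 1)) := by
  constructor
  rw [Measure.restrict_apply_univ, Real.volume_Icc]
  norm_num

lemma indep_double_count {Ω : Type*} [MeasurableSpace Ω] (μ : Measure Ω) [IsProbabilityMeasure μ]
    {m : ℕ} {nv : Fin m → ℕ}
    (W : Option ((j : Fin m) × Fin (nv j)) → Ω → ℝ)
    (hmeas : ∀ a, Measurable (W a))
    (hindep : iIndepFun W μ)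
    (ν : Measure ℝ) (hlaw : ∀ a, Measure.map (W a) μ = ν)
    (L : Set ℝ) [DecidablePred (· ∈ L)] (hLm : MeasurableSet L)
    (P : ∀ j : Fin m, Finset (Fin (nv j)) → Prop) [∀ j, DecidablePred (P j)]
    (Q : Finset (Fin m) → Prop) [DecidablePred Q] :
    μ {ω | Q (Finset.univ.filter fun j =>
        P j (Finset.univ.filter fun i => W (some ⟨j,i⟩) ω ∈ L))}
    = ∑ c ∈ (Fintype.piFinset fun j => (Finset.univ : Finset (Fin (nv j))).powerset).filter
        (fun c => Q (Finset.univ.filter fun j => P j (c j))),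
      ∏ j, ∏ i, (if i ∈ c j then ν L else ν Lᶜ) := by
  set E : (∀ j, Finset (Fin (nv j))) → Set Ω :=
    fun c => {ω | ∀ (j : Fin m) (i : Fin (nv j)), (W (some ⟨j,i⟩) ω ∈ L ↔ i ∈ c j)} with hE
  have hunion : {ω | Q (Finset.univ.filter fun j =>
      P j (Finset.univ.filter fun i => W (some ⟨j,i⟩) ω ∈ L))}
      = ⋃ c ∈ ((Fintype.piFinset fun j => (Finset.univ : Finset (Fin (nv j))).powerset).filter
        (fun c => Q (Finset.univ.filter fun j => P j (c j)))), E c := by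
    ext ω
    simp only [mem_setOf_eq, mem_iUnion, Finset.mem_filter, Fintype.mem_piFinset,
      Finset.mem_powerset, Finset.subset_univ, exists_prop, hE]
    constructor
    · intro h
      exact ⟨fun j => Finset.univ.filter fun i => W (some ⟨j,i⟩) ω ∈ L,
        ⟨fun j => trivial, h⟩, fun j i => by simp⟩
    · rintro ⟨c, ⟨-, hQ⟩, hc⟩
      have : ∀ j, (Finset.univ.filter fun i => W (some ⟨j,i⟩) ω ∈ L) = c j := by
        intro j; ext i; simp [hc j i]
      simpa only [this] using hQ
  have hEinter : ∀ c, E c = ⋂ (j : Fin m) (i : Fin (nv j)),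
      W (some ⟨j,i⟩) ⁻¹' (if i ∈ c j then L else Lᶜ) := by
    intro c
    ext ω
    simp only [hE, mem_setOf_eq, mem_iInter, mem_preimage]
    constructor
    · intro h j i; by_cases hi : i ∈ c j <;> simp [hi, h j i]
    · intro h j i
      have := h j i
      by_cases hi : i ∈ c j <;> simp [hi] at this <;> simp [hi, this]
  rw [hunion, measure_biUnion_finset ?hd ?hm]
  case hd =>
    intro c hc c' hc' hne
    simp only [Function.onFun]
    rw [Set.disjoint_left]
    intro ω hω hω'
    exact hne (funext fun j => by ext i; rw [← hω j i, ← hω' j i])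
  case hm =>
    intro c _
    rw [hEinter]
    exact MeasurableSet.iInter fun j => MeasurableSet.iInter fun i =>
      (hmeas _) (by by_cases hi : i ∈ c j <;> simp [hi, hLm, hLm.compl])
  refine Finset.sum_congr rfl (fun c _ => ?_)
  -- μ (E c) = ∏ j, ∏ i, ...
  set s : Option ((j : Fin m) × Fin (nv j)) → Set Ω := fun a =>
    Option.rec Set.univ (fun b => W (some b) ⁻¹' (if b.2 ∈ c b.1 then L else Lᶜ)) a with hs
  have hEs : E c = ⋂ a, s a := by
    rw [hEinter]
    ext ω
    simp only [mem_iInter]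
    constructor
    · intro h a
      match a with
      | none => trivial
      | some b => exact h b.1 b.2
    · intro h j i
      exact h (some ⟨j, i⟩)
  have hprod := hindep.meas_iInter (s := s) ?_
  · rw [hEs, hprod, Fintype.prod_option]
    have : μ (s none) = 1 := by simp [hs]
    rw [this, one_mul]
    rw [← Finset.univ_sigma_univ, Finset.prod_sigma]
    refine Finset.prod_congr rfl fun j _ => Finset.prod_congr rfl fun i _ => ?_
    have : μ (s (some ⟨j, i⟩)) = ν (if i ∈ c j then L else Lᶜ) := by
      simp only [hs]
      rw [← hlaw (some ⟨j,i⟩), Measure.map_apply (hmeas _)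
        (by by_cases hi : i ∈ c j <;> simp [hi, hLm, hLm.compl])]
    rw [this]
    by_cases hi : i ∈ c j <;> simp [hi]
  · intro a
    match a with
    | none => exact ⟨Set.univ, MeasurableSet.univ, by simp [hs]⟩
    | some b => exact ⟨(if b.2 ∈ c b.1 then L else Lᶜ),
        (by by_cases hi : b.2 ∈ c b.1 <;> simp [hi, hLm, hLm.compl]), rfl⟩

lemma Iic_measure_lt_ofReal {ν : Measure ℝ} [IsProbabilityMeasure ν] {x : ℝ} {p : ℝ}
    (h : (ν (Iic x)).toReal < p) : ν (Iic x) < ENNReal.ofReal p := by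
  have hfin : ν (Iic x) ≠ ⊤ := measure_ne_top ν _
  rw [← ENNReal.ofReal_toReal hfin]
  exact ENNReal.ofReal_lt_ofReal_iff (lt_of_le_of_lt ENNReal.toReal_nonneg h) |>.mpr h

lemma lowerSet_cdf_bound (ν : Measure ℝ) [IsProbabilityMeasure ν] (p : ℝ) :
    ν {x | (ν (Iic x)).toReal < p} ≤ ENNReal.ofReal p := by
  set L := {x | (ν (Iic x)).toReal < p} with hLdef
  have hmono : ∀ x y : ℝ, x ≤ y → (ν (Iic x)).toReal ≤ (ν (Iic y)).toReal :=
    fun x y hxy => ENNReal.toReal_mono (measure_ne_top ν _) (measure_mono (Iic_subset_Iic.mpr hxy))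
  by_cases hmax : ∃ x ∈ L, ∀ y ∈ L, y ≤ x
  · obtain ⟨x, hx, hub⟩ := hmax
    calc ν L ≤ ν (Iic x) := measure_mono (fun y hy => hub y hy)
      _ ≤ ENNReal.ofReal p := le_of_lt (Iic_measure_lt_ofReal hx)
  · push_neg at hmax
    have hsub : L ⊆ ⋃ q : ℚ, (if (q:ℝ) ∈ L then Iic (q:ℝ) else (∅:Set ℝ)) := by
      intro x hx
      obtain ⟨y, hy, hxy⟩ := hmax x hx
      obtain ⟨q, hq1, hq2⟩ := exists_rat_btwn hxy
      have hqL : (q:ℝ) ∈ L := lt_of_le_of_lt (hmono _ _ hq2.le) hy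
      rw [mem_iUnion]
      exact ⟨q, by rw [if_pos hqL]; exact mem_Iic.mpr hq1.le⟩
    have hdir : Directed (· ⊆ ·) (fun q : ℚ => (if (q:ℝ) ∈ L then Iic (q:ℝ) else (∅:Set ℝ))) := by
      intro q q'
      by_cases h2 : (q':ℝ) ∈ L
      · by_cases h1 : (q:ℝ) ∈ L
        · rcases le_total (q:ℝ) (q':ℝ) with h | h
          · exact ⟨q', by simp only [h1, h2, if_true]; exact Iic_subset_Iic.mpr h,
              by simp only [h2, if_true]; exact Set.Subset.rfl⟩
          · exact ⟨q, by simp only [h1, if_true]; exact Set.Subset.rfl,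
              by simp only [h1, h2, if_true]; exact Iic_subset_Iic.mpr h⟩
        · exact ⟨q', by simp only [h1, if_false]; exact empty_subset _,
            by simp only [h2, if_true]; exact Set.Subset.rfl⟩
      · exact ⟨q, (by by_cases h1 : (q:ℝ) ∈ L <;> simp only [h1, if_true, if_false] <;>
            exact Set.Subset.rfl),
          by simp only [h2, if_false]; exact empty_subset _⟩
    calc ν L ≤ ν (⋃ q : ℚ, (if (q:ℝ) ∈ L then Iic (q:ℝ) else (∅:Set ℝ))) := measure_mono hsub
      _ = ⨆ q : ℚ, ν (if (q:ℝ) ∈ L then Iic (q:ℝ) else (∅:Set ℝ)) := hdir.measure_iUnion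
      _ ≤ ENNReal.ofReal p := by
          refine iSup_le fun q => ?_
          by_cases hq : (q:ℝ) ∈ L
          · rw [if_pos hq]; exact le_of_lt (Iic_measure_lt_ofReal hq)
          · rw [if_neg hq]; simp

lemma lowerSet_cdf_eq (ν : Measure ℝ) [IsProbabilityMeasure ν]
    (hatom : ∀ x : ℝ, ν {x} = 0) {p : ℝ} (hp0 : 0 < p) (hp1 : p < 1) :
    ν {x | (ν (Iic x)).toReal < p} = ENNReal.ofReal p := by
  refine le_antisymm (lowerSet_cdf_bound ν p) ?_
  have hFc : ∀ x : ℝ, (ν (Iic x)).toReal = cdf ν x := fun x => (cdf_eq_real ν x).symm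
  set S := {x : ℝ | p ≤ cdf ν x} with hS
  have hSne : S.Nonempty := by
    have := (tendsto_cdf_atTop ν).eventually (eventually_ge_nhds hp1)
    exact this.exists
  have hSbdd : BddBelow S := by
    have := (tendsto_cdf_atBot ν).eventually (eventually_lt_nhds hp0)
    obtain ⟨z, hz⟩ := this.exists
    exact ⟨z, fun s hs => le_of_not_gt fun h =>
      absurd (le_trans hs (monotone_cdf ν h.le)) (not_le.mpr hz)⟩
  set x₀ := sInf S with hx₀def
  have hx₀ : p ≤ cdf ν x₀ := by
    have htd : Filter.Tendsto (cdf ν) (nhdsWithin x₀ (Ioi x₀)) (nhds (cdf ν x₀)) :=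
      ((cdf ν).right_continuous x₀).mono_left (nhdsWithin_mono _ Ioi_subset_Ici_self)
    refine ge_of_tendsto htd ?_
    refine Filter.eventually_of_mem self_mem_nhdsWithin fun x hx => ?_
    obtain ⟨s, hsS, hsx⟩ := (csInf_lt_iff hSbdd hSne).mp hx
    exact le_trans hsS (monotone_cdf ν hsx.le)
  have hIio : Iio x₀ ⊆ {x | (ν (Iic x)).toReal < p} := by
    intro x hx
    have : x ∉ S := fun h => absurd (csInf_le hSbdd h) (not_le.mpr hx)
    rw [mem_setOf_eq, hFc]
    exact not_le.mp this
  calc ENNReal.ofReal p ≤ ENNReal.ofReal (cdf ν x₀) := ENNReal.ofReal_le_ofReal hx₀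
    _ = ν (Iic x₀) := ofReal_cdf ν x₀
    _ ≤ ν (Iio x₀) + ν {x₀} := by
        rw [← Set.Iio_union_right]; exact measure_union_le _ _
    _ = ν (Iio x₀) := by rw [hatom x₀, add_zero]
    _ ≤ ν {x | (ν (Iic x)).toReal < p} := measure_mono hIio

lemma atoms_zero_of_ae_ne {Ω : Type*} [MeasurableSpace Ω] (μ : Measure Ω)
    {X Y : Ω → ℝ} (hX : Measurable X) (hY : Measurable Y)
    (hind : IndepFun X Y μ) {ν : Measure ℝ}
    (hlX : Measure.map X μ = ν) (hlY : Measure.map Y μ = ν)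
    (hzero : μ {ω | X ω = Y ω} = 0) (x : ℝ) : ν {x} = 0 := by
  have h1 : μ (X ⁻¹' {x} ∩ Y ⁻¹' {x}) = ν {x} * ν {x} := by
    have e1 : μ (X ⁻¹' {x}) = ν {x} := by
      rw [← Measure.map_apply hX (measurableSet_singleton x), hlX]
    have e2 : μ (Y ⁻¹' {x}) = ν {x} := by
      rw [← Measure.map_apply hY (measurableSet_singleton x), hlY]
    rw [hind.measure_inter_preimage_eq_mul _ _ (measurableSet_singleton x)
      (measurableSet_singleton x), e1, e2]
  have h2 : X ⁻¹' {x} ∩ Y ⁻¹' {x} ⊆ {ω | X ω = Y ω} := by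
    rintro ω ⟨hω1, hω2⟩
    simp only [mem_preimage, mem_singleton_iff] at hω1 hω2
    simp [mem_setOf_eq, hω1, hω2]
  have h3 : ν {x} * ν {x} = 0 := by
    rw [← h1]
    exact le_antisymm (le_trans (measure_mono h2) (le_of_eq hzero)) zero_le
  rcases mul_eq_zero.mp h3 with h | h <;> exact h

/-- One-shot federated setting with `m` agents holding `n_j` i.i.d.
scores with common cdf `F` (together with the test score): the training-conditional
coverage `F(S_(ℓ₁,…,ℓ_m,k))` satisfies
`P(coverage ≥ 1-α) ≥ PB(k-1; (F_{U_(ℓ_j:n_j)}(1-α))_j)` where `PB(·;u)` is the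
Poisson-Binomial cdf; equality holds when the scores are almost surely distinct. -/
theorem conditional_coverage_qq_nj {Ω : Type*} [MeasurableSpace Ω]
    (μ : Measure Ω) [IsProbabilityMeasure μ]
    {m : ℕ} (hm : 1 ≤ m) (nv : Fin m → ℕ) (hnv : ∀ j, 1 ≤ nv j)
    (ℓ : Fin m → ℕ) (hℓ1 : ∀ j, 1 ≤ ℓ j) (hℓn : ∀ j, ℓ j ≤ nv j)
    (k : ℕ) (hk1 : 1 ≤ k) (hkm : k ≤ m)
    (α : ℝ) (hα : α ∈ Ioo (0:ℝ) 1)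
    (W : Option ((j : Fin m) × Fin (nv j)) → Ω → ℝ) (ν : Measure ℝ)
    (hmeas : ∀ a, Measurable (W a))
    (hindep : iIndepFun W μ)
    (hlaw : ∀ a, Measure.map (W a) μ = ν)
    (F : ℝ → ℝ) (hF : F = fun x => (ν (Iic x)).toReal)
    (Sqq : Ω → ℝ)
    (hSqq : Sqq = fun ω =>
      orderStat (fun j => orderStat (fun i => W (some ⟨j, i⟩) ω) (ℓ j)) k)
    (coverage : Ω → ℝ) (hcov : coverage = fun ω => F (Sqq ω)) :
    ENNReal.ofReal (pbCDF (fun j => betaCDF (nv j) (ℓ j) (1 - α)) (k - 1))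
      ≤ μ {ω | 1 - α ≤ coverage ω}
    ∧ ((∀ a b, a ≠ b → μ {ω | W a ω = W b ω} = 0) →
        (μ {ω | 1 - α ≤ coverage ω}).toReal
          = pbCDF (fun j => betaCDF (nv j) (ℓ j) (1 - α)) (k - 1)) := by
  classical
  obtain ⟨hα0, hα1⟩ := hα
  have ht0 : (0:ℝ) < 1 - α := by linarith
  have ht1 : 1 - α < 1 := by linarith
  have hνprob : IsProbabilityMeasure ν := by
    rw [← hlaw none]; exact Measure.isProbabilityMeasure_map (hmeas none).aemeasurable
  subst hF hSqq hcov
  set F : ℝ → ℝ := fun x => (ν (Iic x)).toReal with hFdef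
  set L : Set ℝ := {x : ℝ | F x < 1 - α} with hLdef
  have hFmono : Monotone F := fun x y hxy =>
    ENNReal.toReal_mono (measure_ne_top ν _) (measure_mono (Iic_subset_Iic.mpr hxy))
  have hLlower : IsLowerSet L := fun x y hyx hx => lt_of_le_of_lt (hFmono hyx) hx
  have hLmeas : MeasurableSet L := hFmono.measurable measurableSet_Iio
  -- the event rewrite
  have hev : {ω | 1 - α ≤ (fun ω => F ((fun ω =>
        orderStat (fun j => orderStat (fun i => W (some ⟨j, i⟩) ω) (ℓ j)) k) ω)) ω}
      = {ω | (Finset.univ.filter fun j =>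
          ℓ j ≤ (Finset.univ.filter fun i => W (some ⟨j,i⟩) ω ∈ L).card).card ≤ k - 1} := by
    ext ω
    simp only [mem_setOf_eq]
    have h1 : (1 - α ≤ F (orderStat (fun j => orderStat (fun i => W (some ⟨j, i⟩) ω) (ℓ j)) k))
        ↔ orderStat (fun j => orderStat (fun i => W (some ⟨j, i⟩) ω) (ℓ j)) k ∉ L :=
      not_lt.symm
    rw [h1, orderStat_mem_lowerSet _ k hk1 hkm hLlower]
    have h2 : (Finset.univ.filter fun j =>
        orderStat (fun i => W (some ⟨j, i⟩) ω) (ℓ j) ∈ L)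
        = (Finset.univ.filter fun j =>
          ℓ j ≤ (Finset.univ.filter fun i => W (some ⟨j,i⟩) ω ∈ L).card) := by
      apply Finset.filter_congr
      intro j _
      exact orderStat_mem_lowerSet _ (ℓ j) (hℓ1 j) (hℓn j) hLlower
    rw [h2]
    omega
  -- measures
  set unif : Measure ℝ := volume.restrict (Icc (0:ℝ) 1) with hunifdef
  set κ : ∀ j : Fin m, Measure (Fin (nv j) → ℝ) :=
    fun j => Measure.pi (fun _ => unif) with hκdef
  haveI hκprob : ∀ j, IsProbabilityMeasure (κ j) := fun j => by
    rw [hκdef]; infer_instance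
  set Aset : ∀ j : Fin m, ℝ → Set (Fin (nv j) → ℝ) :=
    fun j t => {v | ℓ j ≤ (Finset.univ.filter fun i => v i ∈ Iic t).card} with hAsetdef
  have hAmeas : ∀ j t, MeasurableSet (Aset j t) := fun j t =>
    countset_measurable (X := fun _ : Fin (nv j) => ℝ) (fun _ => Iic t)
      (fun _ => measurableSet_Iic) (fun B => ℓ j ≤ B.card)
  set Tset : ℝ → Set (∀ j, Fin (nv j) → ℝ) :=
    fun t => {Z | (Finset.univ.filter fun j => Z j ∈ Aset j t).card ≤ k - 1} with hTsetdef
  have houter : ∀ t : ℝ, Measure.pi κ (Tset t)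
      = ∑ A ∈ Finset.univ.powerset.filter (fun A : Finset (Fin m) => A.card ≤ k - 1),
          ∏ j, (if j ∈ A then κ j (Aset j t) else κ j ((Aset j t)ᶜ)) := fun t =>
    pi_countset_eq κ (fun j => Aset j t) (fun j => hAmeas j t) (fun A => A.card ≤ k - 1)
  have hinner : ∀ (j : Fin m) (t : ℝ),
      κ j (Aset j t) = ∑ B ∈ Finset.univ.powerset.filter (fun B : Finset (Fin (nv j)) =>
        ℓ j ≤ B.card), ∏ i, (if i ∈ B then unif (Iic t) else unif ((Iic t)ᶜ)) := fun j t =>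
    pi_countset_eq (fun _ => unif) (fun _ => Iic t) (fun _ => measurableSet_Iic)
      (fun B => ℓ j ≤ B.card)
  have hinnerc : ∀ (j : Fin m) (t : ℝ),
      κ j ((Aset j t)ᶜ) = ∑ B ∈ Finset.univ.powerset.filter (fun B : Finset (Fin (nv j)) =>
        ¬ ℓ j ≤ B.card), ∏ i, (if i ∈ B then unif (Iic t) else unif ((Iic t)ᶜ)) := by
    intro j t
    have hset : (Aset j t)ᶜ = {v : Fin (nv j) → ℝ |
        ¬ ℓ j ≤ (Finset.univ.filter fun i => v i ∈ Iic t).card} := by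
      rw [hAsetdef]; ext v; simp [mem_setOf_eq]
    rw [hset]
    exact pi_countset_eq (fun _ => unif) (fun _ => Iic t) (fun _ => measurableSet_Iic)
      (fun B : Finset (Fin (nv j)) => ¬ ℓ j ≤ B.card)
  -- q₀ and basic bounds
  set q₀ : ℝ := (ν L).toReal with hq₀def
  have hνLfin : ν L ≠ ⊤ := measure_ne_top ν _
  have hνL : ν L = ENNReal.ofReal q₀ := (ENNReal.ofReal_toReal hνLfin).symm
  have hq00 : 0 ≤ q₀ := ENNReal.toReal_nonneg
  have hbound : ν L ≤ ENNReal.ofReal (1 - α) := lowerSet_cdf_bound ν (1 - α)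
  have hqle : q₀ ≤ 1 - α := by
    rw [hq₀def]
    calc (ν L).toReal ≤ (ENNReal.ofReal (1 - α)).toReal :=
          ENNReal.toReal_mono ENNReal.ofReal_ne_top hbound
      _ = 1 - α := ENNReal.toReal_ofReal ht0.le
  have hq01 : q₀ ≤ 1 := le_trans hqle (by linarith)
  have hunifIic : ∀ t : ℝ, 0 ≤ t → t ≤ 1 → unif (Iic t) = ENNReal.ofReal t := by
    intro t h0 h1
    rw [hunifdef, Measure.restrict_apply measurableSet_Iic]
    have : Iic t ∩ Icc (0:ℝ) 1 = Icc 0 t := by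
      ext x; simp only [mem_inter_iff, mem_Iic, mem_Icc]
      constructor
      · rintro ⟨hx, hx0, -⟩; exact ⟨hx0, hx⟩
      · rintro ⟨hx0, hx⟩; exact ⟨hx, hx0, le_trans hx h1⟩
    rw [this, Real.volume_Icc, sub_zero]
  have hνL_unif : ν L = unif (Iic q₀) := by rw [hνL, hunifIic q₀ hq00 hq01]
  have hνLc_unif : ν Lᶜ = unif ((Iic q₀)ᶜ) := by
    rw [prob_compl_eq_one_sub hLmeas, prob_compl_eq_one_sub measurableSet_Iic, hνL_unif]
  -- Step R1 : μ(event) = Measure.pi κ (Tset q₀)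
  have hμev : μ {ω | 1 - α ≤ (fun ω => F ((fun ω =>
        orderStat (fun j => orderStat (fun i => W (some ⟨j, i⟩) ω) (ℓ j)) k) ω)) ω}
      = Measure.pi κ (Tset q₀) := by
    rw [hev]
    calc μ {ω | (Finset.univ.filter fun j =>
          ℓ j ≤ (Finset.univ.filter fun i => W (some ⟨j,i⟩) ω ∈ L).card).card ≤ k - 1}
        = ∑ c ∈ (Fintype.piFinset fun j => (Finset.univ : Finset (Fin (nv j))).powerset).filter
            (fun c => (Finset.univ.filter fun j => ℓ j ≤ (c j).card).card ≤ k - 1),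
          ∏ j, ∏ i, (if i ∈ c j then ν L else ν Lᶜ) :=
        indep_double_count μ W hmeas hindep ν hlaw L hLmeas
          (fun j B => ℓ j ≤ B.card) (fun s => s.card ≤ k - 1)
      _ = ∑ A ∈ Finset.univ.powerset.filter (fun A : Finset (Fin m) => A.card ≤ k - 1),
          ∏ j, ∑ B ∈ Finset.univ.powerset.filter
            (fun B : Finset (Fin (nv j)) => (ℓ j ≤ B.card) ↔ j ∈ A),
            ∏ i, (if i ∈ B then ν L else ν Lᶜ) :=
        regroup_sum (fun j B => ∏ i, (if i ∈ B then ν L else ν Lᶜ))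
          (fun j B => ℓ j ≤ B.card) (fun s => s.card ≤ k - 1)
      _ = Measure.pi κ (Tset q₀) := by
          rw [houter q₀]
          apply Finset.sum_congr rfl
          intro A hA
          apply Finset.prod_congr rfl
          intro j _
          by_cases hjA : j ∈ A
          · rw [if_pos hjA, hinner j q₀]
            have hfilter : (Finset.univ.powerset.filter fun B : Finset (Fin (nv j)) =>
                (ℓ j ≤ B.card) ↔ j ∈ A)
                = Finset.univ.powerset.filter fun B : Finset (Fin (nv j)) => ℓ j ≤ B.card := by
              apply Finset.filter_congr; intro B _; simp [hjA]
            rw [hfilter]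
            exact Finset.sum_congr rfl fun B _ => Finset.prod_congr rfl fun i _ => by
              rw [hνL_unif, hνLc_unif]
          · rw [if_neg hjA, hinnerc j q₀]
            have hfilter : (Finset.univ.powerset.filter fun B : Finset (Fin (nv j)) =>
                (ℓ j ≤ B.card) ↔ j ∈ A)
                = Finset.univ.powerset.filter fun B : Finset (Fin (nv j)) => ¬ ℓ j ≤ B.card := by
              apply Finset.filter_congr; intro B _; simp [hjA]
            rw [hfilter]
            exact Finset.sum_congr rfl fun B _ => Finset.prod_congr rfl fun i _ => by
              rw [hνL_unif, hνLc_unif]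
  -- Step R2 : ofReal (pbCDF u (k-1)) = Measure.pi κ (Tset (1-α))
  have hbeta : ∀ j, betaOS (nv j) (ℓ j) (Iic (1 - α)) = κ j (Aset j (1 - α)) := by
    intro j
    rw [betaOS, Measure.map_apply (measurable_orderStat (hℓ1 j) (hℓn j)) measurableSet_Iic]
    have hpre : (fun u : Fin (nv j) → ℝ => orderStat u (ℓ j)) ⁻¹' Iic (1 - α)
        = Aset j (1 - α) := by
      ext v
      rw [hAsetdef]
      simp only [mem_preimage, mem_Iic, mem_setOf_eq]
      exact orderStat_mem_lowerSet v (ℓ j) (hℓ1 j) (hℓn j) (isLowerSet_Iic _)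
    rw [hpre]
    rfl
  have hu_eq : ∀ j, ENNReal.ofReal (betaCDF (nv j) (ℓ j) (1 - α)) = κ j (Aset j (1 - α)) := by
    intro j
    rw [betaCDF, hbeta j, ENNReal.ofReal_toReal (measure_ne_top _ _)]
  have hu0 : ∀ j, 0 ≤ betaCDF (nv j) (ℓ j) (1 - α) := fun j => ENNReal.toReal_nonneg
  have hu1 : ∀ j, betaCDF (nv j) (ℓ j) (1 - α) ≤ 1 := by
    intro j
    rw [betaCDF, hbeta j]
    exact ENNReal.toReal_le_of_le_ofReal zero_le_one (by simpa using prob_le_one)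
  have hterm_nonneg : ∀ A : Finset (Fin m),
      0 ≤ (∏ j ∈ A, betaCDF (nv j) (ℓ j) (1 - α))
          * ∏ j ∈ Aᶜ, (1 - betaCDF (nv j) (ℓ j) (1 - α)) :=
    fun A => mul_nonneg (Finset.prod_nonneg fun j _ => hu0 j)
      (Finset.prod_nonneg fun j _ => by linarith [hu1 j])
  have hpb : ENNReal.ofReal (pbCDF (fun j => betaCDF (nv j) (ℓ j) (1 - α)) (k - 1))
      = Measure.pi κ (Tset (1 - α)) := by
    rw [pbCDF, houter (1 - α)]
    rw [ENNReal.ofReal_sum_of_nonneg (fun A _ => hterm_nonneg A)]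
    apply Finset.sum_congr rfl
    intro A hA
    rw [ENNReal.ofReal_mul (Finset.prod_nonneg fun j _ => hu0 j)]
    rw [ENNReal.ofReal_prod_of_nonneg (fun j _ => hu0 j)]
    rw [ENNReal.ofReal_prod_of_nonneg (fun j _ => by linarith [hu1 j])]
    have h2 : ∀ j, ENNReal.ofReal (1 - betaCDF (nv j) (ℓ j) (1 - α))
        = κ j ((Aset j (1 - α))ᶜ) := by
      intro j
      rw [prob_compl_eq_one_sub (hAmeas j (1 - α)), ← hu_eq j]
      rw [ENNReal.ofReal_sub _ (hu0 j), ENNReal.ofReal_one]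
    calc (∏ j ∈ A, ENNReal.ofReal (betaCDF (nv j) (ℓ j) (1 - α)))
          * ∏ j ∈ Aᶜ, ENNReal.ofReal (1 - betaCDF (nv j) (ℓ j) (1 - α))
        = (∏ j ∈ A, κ j (Aset j (1 - α))) * ∏ j ∈ Aᶜ, κ j ((Aset j (1 - α))ᶜ) := by
          rw [Finset.prod_congr rfl fun j _ => hu_eq j, Finset.prod_congr rfl fun j _ => h2 j]
      _ = ∏ j, (if j ∈ A then κ j (Aset j (1 - α)) else κ j ((Aset j (1 - α))ᶜ)) := by
          rw [← Finset.prod_filter_mul_prod_filter_not Finset.univ (· ∈ A)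
            (fun j => if j ∈ A then κ j (Aset j (1 - α)) else κ j ((Aset j (1 - α))ᶜ))]
          congr 1
          · refine Finset.prod_congr (by ext j; simp) (fun j hj => ?_)
            rw [if_pos (by simpa using (Finset.mem_filter.mp hj).2)]
          · refine Finset.prod_congr (by ext j; simp) (fun j hj => ?_)
            rw [if_neg (by simpa using (Finset.mem_filter.mp hj).2)]
  -- monotonicity of Tset
  have hTmono : Tset (1 - α) ⊆ Tset q₀ := by
    intro Z hZ
    rw [hTsetdef] at hZ ⊢
    simp only [mem_setOf_eq] at hZ ⊢
    refine le_trans (le_trans (Finset.card_le_card ?_) le_rfl) hZ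
    intro j hj
    rw [Finset.mem_filter] at hj ⊢
    refine ⟨hj.1, ?_⟩
    have h1 := hj.2
    rw [hAsetdef] at h1 ⊢
    simp only [mem_setOf_eq] at h1 ⊢
    refine le_trans h1 (Finset.card_le_card ?_)
    intro i hi
    rw [Finset.mem_filter] at hi ⊢
    exact ⟨hi.1, le_trans hi.2 hqle⟩
  constructor
  · calc ENNReal.ofReal (pbCDF (fun j => betaCDF (nv j) (ℓ j) (1 - α)) (k - 1))
        = Measure.pi κ (Tset (1 - α)) := hpb
      _ ≤ Measure.pi κ (Tset q₀) := measure_mono hTmono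
      _ = _ := hμev.symm
  · intro hdist
    have hne : (none : Option ((j : Fin m) × Fin (nv j)))
        ≠ some ⟨⟨0, hm⟩, ⟨0, hnv ⟨0, hm⟩⟩⟩ := by simp
    have hatoms : ∀ x : ℝ, ν {x} = 0 := fun x =>
      atoms_zero_of_ae_ne μ (hmeas none) (hmeas (some ⟨⟨0, hm⟩, ⟨0, hnv ⟨0, hm⟩⟩⟩))
        (hindep.indepFun hne) (hlaw none) (hlaw _)
        (hdist none (some ⟨⟨0, hm⟩, ⟨0, hnv ⟨0, hm⟩⟩⟩) hne) x
    have hLeq : ν L = ENNReal.ofReal (1 - α) := lowerSet_cdf_eq ν hatoms ht0 ht1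
    have hq : q₀ = 1 - α := by
      rw [hq₀def, hLeq, ENNReal.toReal_ofReal ht0.le]
    have hpbnn : 0 ≤ pbCDF (fun j => betaCDF (nv j) (ℓ j) (1 - α)) (k - 1) := by
      rw [pbCDF]
      exact Finset.sum_nonneg fun A _ => hterm_nonneg A
    rw [hμev, hq, ← hpb, ENNReal.toReal_ofReal hpbnn]
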